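/- arXiv:2510.00149 — 4 statements merged into one kernel-verified Lean document; each statement's English description precedes it below -/
import Mathlib

section
/- Let B = (G, β) be a bicolored graph and let ab be an edge of G. Then applying local inversions along the string w = ababab (length 6) yields B_w = B^{{a,b}}; that is, the underlying graph is unchanged and exactly the colors of a and b are flipped. -/
open Classical

noncomputable section

/-- The local complement of a simple graph `G` at a vertex `a`: adjacency is toggled
between every pair of distinct neighbors of `a`, all other adjacencies unchanged. -/
def localComp {V : Type*} (G : SimpleGraph V) (a : V) : SimpleGraph V where
  Adj x y := (G.Adj a x ∧ G.Adj a y ∧ x ≠ y ∧ ¬ G.Adj x y) ∨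
             (G.Adj x y ∧ ¬ (G.Adj a x ∧ G.Adj a y))
  symm := by
    constructor
    intro x y h
    rcases h with ⟨hx, hy, hne, hna⟩ | ⟨h, hn⟩
    · exact Or.inl ⟨hy, hx, hne.symm, fun h' => hna h'.symm⟩
    · exact Or.inr ⟨h.symm, fun h' => hn ⟨h'.2, h'.1⟩⟩
  loopless := by
    constructor
    intro x h
    rcases h with ⟨_, _, hne, _⟩ | ⟨h, _⟩
    · exact hne rfl
    · exact G.loopless.irrefl x h

/-- A bicolored graph: a simple graph together with a `{-1,1}`-coloring (units of ℤ). -/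
abbrev Bicolored (V : Type*) := SimpleGraph V × (V → ℤˣ)

/-- Local inversion at a vertex `a`: locally complement the graph at `a` and flip
the colors of all neighbors of `a`. -/
def localInv {V : Type*} (B : Bicolored V) (a : V) : Bicolored V :=
  (localComp B.1 a, fun v => if B.1.Adj a v then - B.2 v else B.2 v)

/-- Sequential local inversion along a string (list) of vertices. -/
def invSeq {V : Type*} (B : Bicolored V) (w : List V) : Bicolored V :=
  w.foldl localInv B

/-- `flipOn B S` keeps the underlying graph and flips the colors exactly on `S`. -/
def flipOn {V : Type*} (B : Bicolored V) (S : Set V) : Bicolored V :=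
  (B.1, fun v => if v ∈ S then - B.2 v else B.2 v)

end


lemma localComp_adj {V : Type*} (G : SimpleGraph V) (a x y : V) :
    (localComp G a).Adj x y ↔ ((G.Adj a x ∧ G.Adj a y ∧ x ≠ y ∧ ¬ G.Adj x y) ∨
      (G.Adj x y ∧ ¬ (G.Adj a x ∧ G.Adj a y))) := Iff.rfl

lemma lc_invol {V : Type*} (G : SimpleGraph V) (v : V) :
    localComp (localComp G v) v = G := by
  ext x y
  have h1 : ¬ G.Adj v v := G.irrefl
  by_cases hx : G.Adj v x <;> by_cases hy : G.Adj v y <;>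
    by_cases hxy : G.Adj x y <;> by_cases hexy : x = y <;>
    simp_all [localComp_adj]

set_option maxHeartbeats 1000000 in
lemma lc_pivot {V : Type*} (G : SimpleGraph V) (a b : V) (hab : G.Adj a b) :
    localComp (localComp (localComp G a) b) a =
    localComp (localComp (localComp G b) a) b := by
  have hba : G.Adj b a := hab.symm
  have hne : a ≠ b := G.ne_of_adj hab
  have hne' : b ≠ a := hne.symm
  have haa : ¬ G.Adj a a := G.irrefl
  have hbb : ¬ G.Adj b b := G.irrefl
  ext x y
  by_cases hxa : x = a <;> by_cases hxb : x = b <;> by_cases hya : y = a <;>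
    by_cases hyb : y = b <;> by_cases hxy : x = y <;> subst_vars <;>
    (try exact absurd rfl hne) <;>
    (try simp only [G.adj_comm b a]) <;>
    (try simp only [G.adj_comm x a]) <;>
    (try simp only [G.adj_comm x b]) <;>
    (try simp only [G.adj_comm y a]) <;>
    (try simp only [G.adj_comm y b]) <;>
    (try by_cases h1 : G.Adj a x) <;>
    (try by_cases h2 : G.Adj a y) <;>
    (try by_cases h3 : G.Adj b x) <;>
    (try by_cases h4 : G.Adj b y) <;>
    (try by_cases h5 : G.Adj x y) <;>
    (try have hxa' : ¬ a = x := fun h => hxa h.symm) <;>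
    (try have hxb' : ¬ b = x := fun h => hxb h.symm) <;>
    (try have hya' : ¬ a = y := fun h => hya h.symm) <;>
    (try have hyb' : ¬ b = y := fun h => hyb h.symm) <;>
    (try have hxy' : ¬ y = x := fun h => hxy h.symm) <;>
    simp_all [localComp_adj]

lemma lc_six {V : Type*} (G : SimpleGraph V) (a b : V) (hab : G.Adj a b) :
    localComp (localComp (localComp (localComp (localComp (localComp G a) b) a) b) a) b
      = G := by
  rw [lc_pivot G a b hab, lc_invol, lc_invol, lc_invol]

set_option maxHeartbeats 2000000 in
theorem stmt2' {V : Type*} (B : Bicolored V) (a b : V) (hab : B.1.Adj a b) :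
    invSeq B [a, b, a, b, a, b] = flipOn B {a, b} := by
  obtain ⟨G, c⟩ := B
  simp only at hab
  have hba : G.Adj b a := hab.symm
  have hne : a ≠ b := G.ne_of_adj hab
  have hne' : ¬ b = a := fun h => hne h.symm
  have haa : ¬ G.Adj a a := G.irrefl
  have hbb : ¬ G.Adj b b := G.irrefl
  simp only [invSeq, List.foldl, localInv, flipOn]
  refine Prod.ext ?_ ?_
  · exact lc_six G a b hab
  · funext v
    simp only [Set.mem_insert_iff, Set.mem_singleton_iff]
    by_cases hva : v = a <;> by_cases hvb : v = b <;> subst_vars <;>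
      (try exact absurd rfl hne) <;>
      (try simp only [G.adj_comm v a]) <;>
      (try simp only [G.adj_comm v b]) <;>
      (try simp only [G.adj_comm b a]) <;>
      (try by_cases h1 : G.Adj a v) <;>
      (try by_cases h2 : G.Adj b v) <;>
      (try have hva' : ¬ a = v := fun h => hva h.symm) <;>
      (try have hvb' : ¬ b = v := fun h => hvb h.symm) <;>
      (try have hvv : ¬ G.Adj v v := G.irrefl) <;>
      simp_all [localComp_adj]

/-- Along an edge `ab`, the string `ababab` flips exactly the colors of `a` and `b`
and leaves the underlying graph unchanged. -/
theorem stmt2 {V : Type*} (B : Bicolored V) (a b : V) (hab : B.1.Adj a b) :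
    invSeq B [a, b, a, b, a, b] = flipOn B {a, b} := stmt2' B a b hab
end

section
/- Let B = (G, β) be a bicolored graph on a path P_3 with vertices a, b, c, where b is the degree-2 vertex (edges ab and bc, no edge ac). Then applying local inversions along the string ababacacb (length 9) yields B_w = (G, -β); that is, all three vertex colors are flipped and the underlying graph remains the path. -/
open Classical

lemma lcA {V : Type*} (G : SimpleGraph V) (a b c : V)
    (hab : a ≠ b) (hbc : b ≠ c) (hac : a ≠ c)
    (p q r : Prop) (h1 : G.Adj a b ↔ p) (h2 : G.Adj b c ↔ q) (h3 : G.Adj a c ↔ r) :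
    ((localComp G a).Adj a b ↔ p) ∧
    ((localComp G a).Adj b c ↔ ((q ∧ ¬(p ∧ r)) ∨ (p ∧ r ∧ ¬q))) ∧
    ((localComp G a).Adj a c ↔ r) := by
  have haa : ¬ G.Adj a a := G.loopless.irrefl a
  refine ⟨?_, ?_, ?_⟩
  · show ((G.Adj a a ∧ G.Adj a b ∧ a ≠ b ∧ ¬G.Adj a b) ∨
      (G.Adj a b ∧ ¬(G.Adj a a ∧ G.Adj a b))) ↔ p
    simp only [h1]; tauto
  · show ((G.Adj a b ∧ G.Adj a c ∧ b ≠ c ∧ ¬G.Adj b c) ∨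
      (G.Adj b c ∧ ¬(G.Adj a b ∧ G.Adj a c))) ↔ _
    simp only [h1, h2, h3]; tauto
  · show ((G.Adj a a ∧ G.Adj a c ∧ a ≠ c ∧ ¬G.Adj a c) ∨
      (G.Adj a c ∧ ¬(G.Adj a a ∧ G.Adj a c))) ↔ r
    simp only [h3]; tauto

lemma full_table {V : Type*} (a b c : V) (hab : a ≠ b) (hbc : b ≠ c) (hac : a ≠ c)
    (huniv : ∀ v : V, v = a ∨ v = b ∨ v = c) (G : SimpleGraph V) (p q r : Prop)
    (h1 : G.Adj a b ↔ p) (h2 : G.Adj b c ↔ q) (h3 : G.Adj a c ↔ r) (x y : V) :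
    G.Adj x y ↔ ((p ∧ ((x = a ∧ y = b) ∨ (x = b ∧ y = a))) ∨
      (q ∧ ((x = b ∧ y = c) ∨ (x = c ∧ y = b))) ∨
      (r ∧ ((x = a ∧ y = c) ∨ (x = c ∧ y = a)))) := by
  have h1' : G.Adj b a ↔ p := (G.adj_comm b a).trans h1
  have h2' : G.Adj c b ↔ q := (G.adj_comm c b).trans h2
  have h3' : G.Adj c a ↔ r := (G.adj_comm c a).trans h3
  have haa : ¬ G.Adj a a := G.loopless.irrefl a
  have hbb : ¬ G.Adj b b := G.loopless.irrefl b
  have hcc : ¬ G.Adj c c := G.loopless.irrefl c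
  rcases huniv x with rfl | rfl | rfl <;> rcases huniv y with rfl | rfl | rfl <;>
    simp [h1, h2, h3, h1', h2', h3', haa, hbb, hcc, hab, hbc, hac,
      hab.symm, hbc.symm, hac.symm]

lemma graph_eq {V : Type*} (a b c : V) (hab : a ≠ b) (hbc : b ≠ c) (hac : a ≠ c)
    (huniv : ∀ v : V, v = a ∨ v = b ∨ v = c) (G G' : SimpleGraph V)
    (h1 : G.Adj a b) (h2 : G.Adj b c) (h3 : ¬ G.Adj a c)
    (h1' : G'.Adj a b) (h2' : G'.Adj b c) (h3' : ¬ G'.Adj a c) : G = G' := by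
  ext x y
  exact (full_table a b c hab hbc hac huniv G True True False
      (iff_true_intro h1) (iff_true_intro h2) (iff_false_intro h3) x y).trans
    (full_table a b c hab hbc hac huniv G' True True False
      (iff_true_intro h1') (iff_true_intro h2') (iff_false_intro h3') x y).symm

/-- A bicolored graph on a path `P_3` with middle vertex `b` is color-reversed by the
string `ababacacb`. -/
theorem stmt6 {V : Type*} (B : Bicolored V) (a b c : V)
    (hab : a ≠ b) (hbc : b ≠ c) (hac : a ≠ c)
    (huniv : ∀ v : V, v = a ∨ v = b ∨ v = c)
    (e1 : B.1.Adj a b) (e2 : B.1.Adj b c) (e3 : ¬ B.1.Adj a c) :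
    invSeq B [a, b, a, b, a, c, a, c, b] = (B.1, fun v => - B.2 v) := by
  obtain ⟨G0, β⟩ := B
  replace e1 : G0.Adj a b := e1
  replace e2 : G0.Adj b c := e2
  replace e3 : ¬ G0.Adj a c := e3
  -- step 1 at a : S1 = (T,T,F)
  have s1 := lcA G0 a b c hab hbc hac True True False
    (iff_true_intro e1) (iff_true_intro e2) (iff_false_intro e3)
  obtain ⟨G1, hG1, a1, b1, c1⟩ :
      ∃ G1, G1 = localComp G0 a ∧ G1.Adj a b ∧ G1.Adj b c ∧ ¬ G1.Adj a c :=
    ⟨_, rfl, by simpa using s1.1, by simpa using s1.2.1, by simpa using s1.2.2⟩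
  -- step 2 at b : S2 = (T,T,T)
  have s2 := lcA G1 b a c hab.symm hac hbc True False True
    (iff_true_intro a1.symm) (iff_false_intro c1) (iff_true_intro b1)
  obtain ⟨G2, hG2, a2, b2, c2⟩ :
      ∃ G2, G2 = localComp G1 b ∧ G2.Adj b a ∧ G2.Adj a c ∧ G2.Adj b c :=
    ⟨_, rfl, by simpa using s2.1, by simpa using s2.2.1, by simpa using s2.2.2⟩
  -- step 3 at a : S3 = (T,F,T)
  have s3 := lcA G2 a b c hab hbc hac True True True
    (iff_true_intro a2.symm) (iff_true_intro c2) (iff_true_intro b2)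
  obtain ⟨G3, hG3, a3, b3, c3⟩ :
      ∃ G3, G3 = localComp G2 a ∧ G3.Adj a b ∧ ¬ G3.Adj b c ∧ G3.Adj a c :=
    ⟨_, rfl, by simpa using s3.1, by simpa using s3.2.1, by simpa using s3.2.2⟩
  -- step 4 at b : S4 = (T,F,T)
  have s4 := lcA G3 b a c hab.symm hac hbc True True False
    (iff_true_intro a3.symm) (iff_true_intro c3) (iff_false_intro b3)
  obtain ⟨G4, hG4, a4, b4, c4⟩ :
      ∃ G4, G4 = localComp G3 b ∧ G4.Adj b a ∧ G4.Adj a c ∧ ¬ G4.Adj b c :=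
    ⟨_, rfl, by simpa using s4.1, by simpa using s4.2.1, by simpa using s4.2.2⟩
  -- step 5 at a : S5 = (T,T,T)
  have s5 := lcA G4 a b c hab hbc hac True False True
    (iff_true_intro a4.symm) (iff_false_intro c4) (iff_true_intro b4)
  obtain ⟨G5, hG5, a5, b5, c5⟩ :
      ∃ G5, G5 = localComp G4 a ∧ G5.Adj a b ∧ G5.Adj b c ∧ G5.Adj a c :=
    ⟨_, rfl, by simpa using s5.1, by simpa using s5.2.1, by simpa using s5.2.2⟩
  -- step 6 at c : S6 = (F,T,T)
  have s6 := lcA G5 c b a hbc.symm hab.symm hac.symm True True True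
    (iff_true_intro b5.symm) (iff_true_intro a5.symm) (iff_true_intro c5.symm)
  obtain ⟨G6, hG6, a6, b6, c6⟩ :
      ∃ G6, G6 = localComp G5 c ∧ G6.Adj c b ∧ ¬ G6.Adj b a ∧ G6.Adj c a :=
    ⟨_, rfl, by simpa using s6.1, by simpa using s6.2.1, by simpa using s6.2.2⟩
  -- step 7 at a : S7 = (F,T,T)
  have s7 := lcA G6 a b c hab hbc hac False True True
    (iff_false_intro (fun h => b6 h.symm)) (iff_true_intro a6.symm)
    (iff_true_intro c6.symm)
  obtain ⟨G7, hG7, a7, b7, c7⟩ :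
      ∃ G7, G7 = localComp G6 a ∧ ¬ G7.Adj a b ∧ G7.Adj b c ∧ G7.Adj a c :=
    ⟨_, rfl, by simpa using s7.1, by simpa using s7.2.1, by simpa using s7.2.2⟩
  -- step 8 at c : S8 = (T,T,T)
  have s8 := lcA G7 c b a hbc.symm hab.symm hac.symm True False True
    (iff_true_intro b7.symm) (iff_false_intro (fun h => a7 h.symm))
    (iff_true_intro c7.symm)
  obtain ⟨G8, hG8, a8, b8, c8⟩ :
      ∃ G8, G8 = localComp G7 c ∧ G8.Adj c b ∧ G8.Adj b a ∧ G8.Adj c a :=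
    ⟨_, rfl, by simpa using s8.1, by simpa using s8.2.1, by simpa using s8.2.2⟩
  -- step 9 at b : S9 = (T,T,F)
  have s9 := lcA G8 b a c hab.symm hac hbc True True True
    (iff_true_intro b8) (iff_true_intro c8.symm) (iff_true_intro a8.symm)
  obtain ⟨G9, hG9, a9, b9, c9⟩ :
      ∃ G9, G9 = localComp G8 b ∧ G9.Adj b a ∧ ¬ G9.Adj a c ∧ G9.Adj b c :=
    ⟨_, rfl, by simpa using s9.1, by simpa using s9.2.1, by simpa using s9.2.2⟩
  dsimp only [invSeq, List.foldl, localInv]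
  simp only [← hG1, ← hG2, ← hG3, ← hG4, ← hG5, ← hG6, ← hG7, ← hG8, ← hG9]
  refine Prod.ext ?_ ?_
  · exact graph_eq a b c hab hbc hac huniv G9 G0 a9.symm c9 b9 e1 e2 e3
  · funext v
    have n0 : ¬ G0.Adj a c := e3
    have n6 : ¬ G6.Adj a b := fun h => b6 h.symm
    rcases huniv v with rfl | rfl | rfl <;>
      simp [e1, n0, a1.symm, b1, a2.symm, b2, a3.symm, b3, a4.symm, b4,
        c5.symm, b5.symm, n6, c6.symm, c7.symm, b7.symm, b8, a8.symm,
        SimpleGraph.irrefl]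
end

section
/- Let G be a connected graph on n ≥ 3 vertices, let a be any vertex of G, and let B be any bicolored graph on G. Then there exists a string w of length 7 such that B_w = B^{a}; that is, the underlying graph is unchanged and exactly the color of a is flipped. -/
open Classical

namespace Stmt9Aux

/-! ### Boolean model of local inversion on `Fin k` -/

def stepB {k : ℕ} (g : Fin k → Fin k → Bool) (p : Fin k) : Fin k → Fin k → Bool :=
  fun i j => (g p i && g p j && !(decide (i = j)) && !(g i j)) || (g i j && !(g p i && g p j))

def stepS {k : ℕ} (s : (Fin k → Fin k → Bool) × (Fin k → Bool)) (p : Fin k) :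
    (Fin k → Fin k → Bool) × (Fin k → Bool) :=
  (stepB s.1 p, fun v => xor (s.2 v) (s.1 p v))

def runS {k : ℕ} (s : (Fin k → Fin k → Bool) × (Fin k → Bool)) (w : List (Fin k)) :
    (Fin k → Fin k → Bool) × (Fin k → Bool) := w.foldl stepS s

/-! ### Simulation lemma -/

lemma stepB_iff {k : ℕ} (g : Fin k → Fin k → Bool) (p i j : Fin k) :
    stepB g p i j = true ↔
      ((g p i = true ∧ g p j = true ∧ ¬ i = j ∧ ¬ g i j = true) ∨
       (g i j = true ∧ ¬ (g p i = true ∧ g p j = true))) := by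
  unfold stepB
  by_cases h : i = j <;> cases hpi : g p i <;> cases hpj : g p j <;> cases hij : g i j <;>
    simp [h, hpi, hpj, hij]

theorem sim {V : Type*} {k : ℕ} (h : Fin k → V) (hinj : Function.Injective h) :
    ∀ (wIdx : List (Fin k)) (B : Bicolored V) (g : Fin k → Fin k → Bool)
      (e : Fin k → Bool) (β0 : Fin k → ℤˣ),
      (∀ i j, B.1.Adj (h i) (h j) ↔ g i j = true) →
      (∀ i, B.2 (h i) = if e i then - β0 i else β0 i) →
      (∀ i j, ((invSeq B (wIdx.map h)).1.Adj (h i) (h j) ↔ (runS (g, e) wIdx).1 i j = true))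
      ∧ (∀ i, (invSeq B (wIdx.map h)).2 (h i)
            = if (runS (g, e) wIdx).2 i then - β0 i else β0 i) := by
  intro wIdx
  induction wIdx with
  | nil => intro B g e β0 hg hβ; exact ⟨hg, hβ⟩
  | cons p rest ih =>
    intro B g e β0 hg hβ
    have hg' : ∀ i j, (localInv B (h p)).1.Adj (h i) (h j) ↔ stepB g p i j = true := by
      intro i j
      have hADJ : (localInv B (h p)).1.Adj (h i) (h j) ↔
          ((B.1.Adj (h p) (h i) ∧ B.1.Adj (h p) (h j) ∧ h i ≠ h j ∧ ¬ B.1.Adj (h i) (h j)) ∨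
           (B.1.Adj (h i) (h j) ∧ ¬ (B.1.Adj (h p) (h i) ∧ B.1.Adj (h p) (h j)))) := Iff.rfl
      rw [hADJ, stepB_iff]
      simp only [hg, hinj.ne_iff, ne_eq]
    have hβ' : ∀ i, (localInv B (h p)).2 (h i)
        = if xor (e i) (g p i) then - β0 i else β0 i := by
      intro i
      have : (localInv B (h p)).2 (h i)
          = if B.1.Adj (h p) (h i) then - B.2 (h i) else B.2 (h i) := rfl
      rw [this]
      by_cases hadj : B.1.Adj (h p) (h i)
      · have hgpi : g p i = true := (hg p i).mp hadj
        rw [if_pos hadj, hβ, hgpi]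
        cases e i <;> simp
      · have hgpi : g p i = false := by
          cases hgpi : g p i
          · rfl
          · exact absurd ((hg p i).mpr hgpi) hadj
        rw [if_neg hadj, hβ, hgpi]
        cases e i <;> simp
    have := ih (localInv B (h p)) (stepB g p) (fun v => xor (e v) (g p v)) β0 hg' hβ'
    exact this

/-! ### Encoded graphs on small vertex sets -/

def pairIdx3 : Fin 3 → Fin 3 → ℕ := ![![0,0,1],![0,0,2],![1,2,0]]
def pairIdx4 : Fin 4 → Fin 4 → ℕ := ![![0,0,1,2],![0,0,3,4],![1,3,0,5],![2,4,5,0]]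
def pairIdx5 : Fin 5 → Fin 5 → ℕ :=
  ![![0,0,1,2,3],![0,0,4,5,6],![1,4,0,7,8],![2,5,7,0,9],![3,6,8,9,0]]

def adjN3 (m : ℕ) (i j : Fin 3) : Bool :=
  if i = j then false else m.testBit (pairIdx3 i j)
def adjN4 (m : ℕ) (i j : Fin 4) : Bool :=
  if i = j then false else m.testBit (pairIdx4 i j)
def adjN5 (m : ℕ) (i j : Fin 5) : Bool :=
  if i = j then false else m.testBit (pairIdx5 i j)

def wP3 : List (Fin 3) := [0,1,0,2,0,1,2]
def wP4 : List (Fin 4) := [0,1,0,2,0,1,2]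
def wP5 : List (Fin 5) := [0,1,0,2,0,1,2]
def wS3 : List (Fin 3) := [0,1,0,2,1,0,2]
def wS4 : List (Fin 4) := [0,1,0,2,1,0,2]
def wS5 : List (Fin 5) := [0,1,0,2,1,0,2]

set_option maxRecDepth 20000 in
set_option maxHeartbeats 4000000 in
lemma check3P : ∀ m < 8, (adjN3 m 0 1 && adjN3 m 1 2) = true →
    runS (adjN3 m, fun _ => false) wP3 = (adjN3 m, fun i => decide (i = 0)) := by decide

set_option maxRecDepth 20000 in
set_option maxHeartbeats 4000000 in
lemma check4P : ∀ m < 64, (adjN4 m 0 1 && adjN4 m 1 2) = true →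
    runS (adjN4 m, fun _ => false) wP4 = (adjN4 m, fun i => decide (i = 0)) := by decide

set_option maxRecDepth 20000 in
set_option maxHeartbeats 4000000 in
lemma check5P : ∀ m < 1024, (adjN5 m 0 1 && adjN5 m 1 2) = true →
    runS (adjN5 m, fun _ => false) wP5 = (adjN5 m, fun i => decide (i = 0)) := by decide

set_option maxRecDepth 20000 in
set_option maxHeartbeats 4000000 in
lemma check3S : ∀ m < 8, (adjN3 m 0 1 && adjN3 m 0 2 && !adjN3 m 1 2) = true →
    runS (adjN3 m, fun _ => false) wS3 = (adjN3 m, fun i => decide (i = 0)) := by decide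

set_option maxRecDepth 20000 in
set_option maxHeartbeats 4000000 in
lemma check4S : ∀ m < 64, (adjN4 m 0 1 && adjN4 m 0 2 && !adjN4 m 1 2) = true →
    runS (adjN4 m, fun _ => false) wS4 = (adjN4 m, fun i => decide (i = 0)) := by decide

set_option maxRecDepth 20000 in
set_option maxHeartbeats 4000000 in
lemma check5S : ∀ m < 1024, (adjN5 m 0 1 && adjN5 m 0 2 && !adjN5 m 1 2) = true →
    runS (adjN5 m, fun _ => false) wS5 = (adjN5 m, fun i => decide (i = 0)) := by decide

lemma bit_lt {b : Bool} {n k : ℕ} (h : n < 2 ^ k) : Nat.bit b n < 2 ^ (k + 1) := by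
  cases b <;> simp [Nat.bit] <;> omega

lemma abstract3 (g : Fin 3 → Fin 3 → Bool) (hsym : ∀ i j, g i j = g j i)
    (hirr : ∀ i, g i i = false) : ∃ m < 8, adjN3 m = g := by
  refine ⟨Nat.bit (g 0 1) (Nat.bit (g 0 2) (Nat.bit (g 1 2) 0)), ?_, ?_⟩
  · have h0 : (0:ℕ) < 2 ^ 0 := by norm_num
    have := bit_lt (b := g 0 1) (bit_lt (b := g 0 2) (bit_lt (b := g 1 2) h0))
    simpa using this
  · funext i j
    fin_cases i <;> fin_cases j <;>
      simp [adjN3, pairIdx3, Nat.testBit_bit_succ, Nat.testBit_bit_zero, hirr, hsym] <;>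
      try exact hsym _ _

lemma abstract4 (g : Fin 4 → Fin 4 → Bool) (hsym : ∀ i j, g i j = g j i)
    (hirr : ∀ i, g i i = false) : ∃ m < 64, adjN4 m = g := by
  refine ⟨Nat.bit (g 0 1) (Nat.bit (g 0 2) (Nat.bit (g 0 3) (Nat.bit (g 1 2)
      (Nat.bit (g 1 3) (Nat.bit (g 2 3) 0))))), ?_, ?_⟩
  · have h0 : (0:ℕ) < 2 ^ 0 := by norm_num
    have := bit_lt (b := g 0 1) (bit_lt (b := g 0 2) (bit_lt (b := g 0 3)
      (bit_lt (b := g 1 2) (bit_lt (b := g 1 3) (bit_lt (b := g 2 3) h0)))))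
    simpa using this
  · funext i j
    fin_cases i <;> fin_cases j <;>
      simp [adjN4, pairIdx4, Nat.testBit_bit_succ, Nat.testBit_bit_zero, hirr, hsym] <;>
      try exact hsym _ _

lemma abstract5 (g : Fin 5 → Fin 5 → Bool) (hsym : ∀ i j, g i j = g j i)
    (hirr : ∀ i, g i i = false) : ∃ m < 1024, adjN5 m = g := by
  refine ⟨Nat.bit (g 0 1) (Nat.bit (g 0 2) (Nat.bit (g 0 3) (Nat.bit (g 0 4) (Nat.bit (g 1 2)
      (Nat.bit (g 1 3) (Nat.bit (g 1 4) (Nat.bit (g 2 3) (Nat.bit (g 2 4)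
      (Nat.bit (g 3 4) 0))))))))), ?_, ?_⟩
  · have h0 : (0:ℕ) < 2 ^ 0 := by norm_num
    have := bit_lt (b := g 0 1) (bit_lt (b := g 0 2) (bit_lt (b := g 0 3) (bit_lt (b := g 0 4)
      (bit_lt (b := g 1 2) (bit_lt (b := g 1 3) (bit_lt (b := g 1 4) (bit_lt (b := g 2 3)
      (bit_lt (b := g 2 4) (bit_lt (b := g 3 4) h0)))))))))
    simpa using this
  · funext i j
    fin_cases i <;> fin_cases j <;>
      simp [adjN5, pairIdx5, Nat.testBit_bit_succ, Nat.testBit_bit_zero, hirr, hsym] <;>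
      try exact hsym _ _


/-! ### Abstract versions of the finite checks -/

lemma run3P (g : Fin 3 → Fin 3 → Bool) (hsym : ∀ i j, g i j = g j i) (hirr : ∀ i, g i i = false)
    (h01 : g 0 1 = true) (h12 : g 1 2 = true) :
    runS (g, fun _ => false) wP3 = (g, fun i => decide (i = 0)) := by
  obtain ⟨m, hm, rfl⟩ := abstract3 g hsym hirr
  exact check3P m hm (by simp [h01, h12])

lemma run4P (g : Fin 4 → Fin 4 → Bool) (hsym : ∀ i j, g i j = g j i) (hirr : ∀ i, g i i = false)
    (h01 : g 0 1 = true) (h12 : g 1 2 = true) :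
    runS (g, fun _ => false) wP4 = (g, fun i => decide (i = 0)) := by
  obtain ⟨m, hm, rfl⟩ := abstract4 g hsym hirr
  exact check4P m hm (by simp [h01, h12])

lemma run5P (g : Fin 5 → Fin 5 → Bool) (hsym : ∀ i j, g i j = g j i) (hirr : ∀ i, g i i = false)
    (h01 : g 0 1 = true) (h12 : g 1 2 = true) :
    runS (g, fun _ => false) wP5 = (g, fun i => decide (i = 0)) := by
  obtain ⟨m, hm, rfl⟩ := abstract5 g hsym hirr
  exact check5P m hm (by simp [h01, h12])

lemma run3S (g : Fin 3 → Fin 3 → Bool) (hsym : ∀ i j, g i j = g j i) (hirr : ∀ i, g i i = false)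
    (h01 : g 0 1 = true) (h02 : g 0 2 = true) (h12 : g 1 2 = false) :
    runS (g, fun _ => false) wS3 = (g, fun i => decide (i = 0)) := by
  obtain ⟨m, hm, rfl⟩ := abstract3 g hsym hirr
  exact check3S m hm (by simp [h01, h02, h12])

lemma run4S (g : Fin 4 → Fin 4 → Bool) (hsym : ∀ i j, g i j = g j i) (hirr : ∀ i, g i i = false)
    (h01 : g 0 1 = true) (h02 : g 0 2 = true) (h12 : g 1 2 = false) :
    runS (g, fun _ => false) wS4 = (g, fun i => decide (i = 0)) := by
  obtain ⟨m, hm, rfl⟩ := abstract4 g hsym hirr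
  exact check4S m hm (by simp [h01, h02, h12])

lemma run5S (g : Fin 5 → Fin 5 → Bool) (hsym : ∀ i j, g i j = g j i) (hirr : ∀ i, g i i = false)
    (h01 : g 0 1 = true) (h02 : g 0 2 = true) (h12 : g 1 2 = false) :
    runS (g, fun _ => false) wS5 = (g, fun i => decide (i = 0)) := by
  obtain ⟨m, hm, rfl⟩ := abstract5 g hsym hirr
  exact check5S m hm (by simp [h01, h02, h12])

/-! ### Tuple embeddings -/

def v3 {V : Type*} (a b c : V) : Fin 3 → V
  | 0 => a | 1 => b | 2 => c

def v4 {V : Type*} (a b c d : V) : Fin 4 → V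
  | 0 => a | 1 => b | 2 => c | 3 => d

def v5 {V : Type*} (a b c d e : V) : Fin 5 → V
  | 0 => a | 1 => b | 2 => c | 3 => d | 4 => e

lemma v3_inj {V : Type*} {a b c : V} (hab : a ≠ b) (hac : a ≠ c) (hbc : b ≠ c) :
    Function.Injective (v3 a b c) := by
  intro i j hij
  fin_cases i <;> fin_cases j <;>
    first
    | rfl
    | exact absurd hij hab | exact absurd hij hac | exact absurd hij hbc
    | exact absurd hij.symm hab | exact absurd hij.symm hac | exact absurd hij.symm hbc

lemma v4_inj {V : Type*} {a b c d : V} (hab : a ≠ b) (hac : a ≠ c) (had : a ≠ d)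
    (hbc : b ≠ c) (hbd : b ≠ d) (hcd : c ≠ d) :
    Function.Injective (v4 a b c d) := by
  intro i j hij
  fin_cases i <;> fin_cases j <;>
    first
    | rfl
    | exact absurd hij hab | exact absurd hij hac | exact absurd hij had
    | exact absurd hij hbc | exact absurd hij hbd | exact absurd hij hcd
    | exact absurd hij.symm hab | exact absurd hij.symm hac | exact absurd hij.symm had
    | exact absurd hij.symm hbc | exact absurd hij.symm hbd | exact absurd hij.symm hcd

lemma v5_inj {V : Type*} {a b c d e : V} (hab : a ≠ b) (hac : a ≠ c) (had : a ≠ d)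
    (hae : a ≠ e) (hbc : b ≠ c) (hbd : b ≠ d) (hbe : b ≠ e) (hcd : c ≠ d) (hce : c ≠ e)
    (hde : d ≠ e) :
    Function.Injective (v5 a b c d e) := by
  intro i j hij
  fin_cases i <;> fin_cases j <;>
    first
    | rfl
    | exact absurd hij hab | exact absurd hij hac | exact absurd hij had
    | exact absurd hij hae | exact absurd hij hbc | exact absurd hij hbd
    | exact absurd hij hbe | exact absurd hij hcd | exact absurd hij hce
    | exact absurd hij hde
    | exact absurd hij.symm hab | exact absurd hij.symm hac | exact absurd hij.symm had
    | exact absurd hij.symm hae | exact absurd hij.symm hbc | exact absurd hij.symm hbd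
    | exact absurd hij.symm hbe | exact absurd hij.symm hcd | exact absurd hij.symm hce
    | exact absurd hij.symm hde

/-! ### Using the simulation -/

lemma useSim {V : Type*} {k : ℕ} (G : SimpleGraph V) (β : V → ℤˣ)
    (h : Fin (k + 1) → V) (hinj : Function.Injective h) (wIdx : List (Fin (k + 1)))
    (g : Fin (k + 1) → Fin (k + 1) → Bool)
    (hg : ∀ i j, G.Adj (h i) (h j) ↔ g i j = true)
    (hrun : runS (g, fun _ => false) wIdx = (g, fun i => decide (i = 0))) :
    (∀ i j, ((invSeq (G, β) (wIdx.map h)).1.Adj (h i) (h j) ↔ G.Adj (h i) (h j)))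
    ∧ (∀ i, (invSeq (G, β) (wIdx.map h)).2 (h i)
        = if i = 0 then - β (h i) else β (h i)) := by
  have hs := sim h hinj wIdx (G, β) g (fun _ => false) (fun i => β (h i))
    hg (fun i => by simp)
  rw [hrun] at hs
  refine ⟨fun i j => ?_, fun i => ?_⟩
  · rw [hs.1 i j]; exact (hg i j).symm
  · rw [hs.2 i]
    by_cases hi : i = 0 <;> simp [hi]

lemma assemble {V : Type*} (G : SimpleGraph V) (β : V → ℤˣ) (a b c : V) (w : List V)
    (hab' : a ≠ b) (hac' : a ≠ c) (hbc' : b ≠ c)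
    (H3 : (∀ i j, ((invSeq (G, β) w).1.Adj (v3 a b c i) (v3 a b c j) ↔
            G.Adj (v3 a b c i) (v3 a b c j)))
        ∧ (∀ i, (invSeq (G, β) w).2 (v3 a b c i)
            = if i = 0 then - β (v3 a b c i) else β (v3 a b c i)))
    (H4 : ∀ x : V, x ≠ a → x ≠ b → x ≠ c →
        (∀ i j, ((invSeq (G, β) w).1.Adj (v4 a b c x i) (v4 a b c x j) ↔
            G.Adj (v4 a b c x i) (v4 a b c x j)))
        ∧ (∀ i, (invSeq (G, β) w).2 (v4 a b c x i)
            = if i = 0 then - β (v4 a b c x i) else β (v4 a b c x i)))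
    (H5 : ∀ x y : V, x ≠ a → x ≠ b → x ≠ c → y ≠ a → y ≠ b → y ≠ c → x ≠ y →
        (∀ i j, ((invSeq (G, β) w).1.Adj (v5 a b c x y i) (v5 a b c x y j) ↔
            G.Adj (v5 a b c x y i) (v5 a b c x y j)))) :
    invSeq (G, β) w = flipOn (G, β) {a} := by
  have hgr : (invSeq (G, β) w).1 = G := by
    ext x y
    by_cases hx : x = a ∨ x = b ∨ x = c
    · by_cases hy : y = a ∨ y = b ∨ y = c
      · rcases hx with rfl | rfl | rfl <;> rcases hy with rfl | rfl | rfl <;>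
          first
          | exact H3.1 0 0 | exact H3.1 0 1 | exact H3.1 0 2
          | exact H3.1 1 0 | exact H3.1 1 1 | exact H3.1 1 2
          | exact H3.1 2 0 | exact H3.1 2 1 | exact H3.1 2 2
      · push_neg at hy
        obtain ⟨h1, h2, h3⟩ := hy
        rcases hx with rfl | rfl | rfl
        · exact (H4 y h1 h2 h3).1 0 3
        · exact (H4 y h1 h2 h3).1 1 3
        · exact (H4 y h1 h2 h3).1 2 3
    · push_neg at hx
      obtain ⟨h1, h2, h3⟩ := hx
      by_cases hy : y = a ∨ y = b ∨ y = c
      · rcases hy with rfl | rfl | rfl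
        · exact (H4 x h1 h2 h3).1 3 0
        · exact (H4 x h1 h2 h3).1 3 1
        · exact (H4 x h1 h2 h3).1 3 2
      · push_neg at hy
        obtain ⟨h4, h5, h6⟩ := hy
        by_cases hxy : x = y
        · subst hxy
          exact iff_of_false ((invSeq (G, β) w).1.loopless.irrefl x) (G.loopless.irrefl x)
        · exact H5 x y h1 h2 h3 h4 h5 h6 hxy 3 4
  have hcol : (invSeq (G, β) w).2 = fun v => if v ∈ ({a} : Set V) then - β v else β v := by
    funext v
    simp only [Set.mem_singleton_iff]
    by_cases hv : v = a ∨ v = b ∨ v = c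
    · rcases hv with rfl | rfl | rfl
      · have := H3.2 0
        rw [if_pos rfl] at this
        rw [if_pos rfl]
        exact this
      · have := H3.2 1
        rw [if_neg (by decide)] at this
        rw [if_neg (Ne.symm hab')]
        exact this
      · have := H3.2 2
        rw [if_neg (by decide)] at this
        rw [if_neg (Ne.symm hac')]
        exact this
    · push_neg at hv
      obtain ⟨h1, h2, h3⟩ := hv
      have := (H4 v h1 h2 h3).2 3
      rw [if_neg (by decide)] at this
      rw [if_neg h1]
      exact this
  have hflip : flipOn (G, β) ({a} : Set V)
      = (G, fun v => if v ∈ ({a} : Set V) then - β v else β v) := rfl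
  have heta : invSeq (G, β) w = ((invSeq (G, β) w).1, (invSeq (G, β) w).2) := rfl
  rw [hflip, heta, hgr, hcol]

/-! ### The two key configurations -/

lemma keyP {V : Type*} (G : SimpleGraph V) (β : V → ℤˣ) (a b c : V)
    (hab : G.Adj a b) (hbc : G.Adj b c) (hca : c ≠ a) :
    invSeq (G, β) [a, b, a, c, a, b, c] = flipOn (G, β) {a} := by
  have hab' : a ≠ b := hab.ne
  have hbc' : b ≠ c := hbc.ne
  have hac' : a ≠ c := Ne.symm hca
  apply assemble G β a b c _ hab' hac' hbc'
  · have h := useSim G β (v3 a b c) (v3_inj hab' hac' hbc') wP3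
      (fun i j => decide (G.Adj (v3 a b c i) (v3 a b c j)))
      (fun i j => by simp)
      (run3P _ (fun i j => by simp [G.adj_comm])
        (fun i => decide_eq_false (G.loopless.irrefl _))
        (decide_eq_true hab) (decide_eq_true hbc))
    have e3 : wP3.map (v3 a b c) = [a, b, a, c, a, b, c] := rfl
    rw [e3] at h
    exact h
  · intro x h1 h2 h3
    have h := useSim G β (v4 a b c x)
      (v4_inj hab' hac' (Ne.symm h1) hbc' (Ne.symm h2) (Ne.symm h3)) wP4
      (fun i j => decide (G.Adj (v4 a b c x i) (v4 a b c x j)))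
      (fun i j => by simp)
      (run4P _ (fun i j => by simp [G.adj_comm])
        (fun i => decide_eq_false (G.loopless.irrefl _))
        (decide_eq_true hab) (decide_eq_true hbc))
    have e4 : wP4.map (v4 a b c x) = [a, b, a, c, a, b, c] := rfl
    rw [e4] at h
    exact h
  · intro x y h1 h2 h3 h4 h5 h6 hxy
    have h := useSim G β (v5 a b c x y)
      (v5_inj hab' hac' (Ne.symm h1) (Ne.symm h4) hbc' (Ne.symm h2) (Ne.symm h5)
        (Ne.symm h3) (Ne.symm h6) hxy) wP5
      (fun i j => decide (G.Adj (v5 a b c x y i) (v5 a b c x y j)))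
      (fun i j => by simp)
      (run5P _ (fun i j => by simp [G.adj_comm])
        (fun i => decide_eq_false (G.loopless.irrefl _))
        (decide_eq_true hab) (decide_eq_true hbc))
    have e5 : wP5.map (v5 a b c x y) = [a, b, a, c, a, b, c] := rfl
    rw [e5] at h
    exact h.1

lemma keyS {V : Type*} (G : SimpleGraph V) (β : V → ℤˣ) (a b c : V)
    (hab : G.Adj a b) (hac : G.Adj a c) (hnbc : ¬ G.Adj b c) (hbc' : b ≠ c) :
    invSeq (G, β) [a, b, a, c, b, a, c] = flipOn (G, β) {a} := by
  have hab' : a ≠ b := hab.ne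
  have hac' : a ≠ c := hac.ne
  apply assemble G β a b c _ hab' hac' hbc'
  · have h := useSim G β (v3 a b c) (v3_inj hab' hac' hbc') wS3
      (fun i j => decide (G.Adj (v3 a b c i) (v3 a b c j)))
      (fun i j => by simp)
      (run3S _ (fun i j => by simp [G.adj_comm])
        (fun i => decide_eq_false (G.loopless.irrefl _))
        (decide_eq_true hab) (decide_eq_true hac) (decide_eq_false hnbc))
    have e3 : wS3.map (v3 a b c) = [a, b, a, c, b, a, c] := rfl
    rw [e3] at h
    exact h
  · intro x h1 h2 h3
    have h := useSim G β (v4 a b c x)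
      (v4_inj hab' hac' (Ne.symm h1) hbc' (Ne.symm h2) (Ne.symm h3)) wS4
      (fun i j => decide (G.Adj (v4 a b c x i) (v4 a b c x j)))
      (fun i j => by simp)
      (run4S _ (fun i j => by simp [G.adj_comm])
        (fun i => decide_eq_false (G.loopless.irrefl _))
        (decide_eq_true hab) (decide_eq_true hac) (decide_eq_false hnbc))
    have e4 : wS4.map (v4 a b c x) = [a, b, a, c, b, a, c] := rfl
    rw [e4] at h
    exact h
  · intro x y h1 h2 h3 h4 h5 h6 hxy
    have h := useSim G β (v5 a b c x y)
      (v5_inj hab' hac' (Ne.symm h1) (Ne.symm h4) hbc' (Ne.symm h2) (Ne.symm h5)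
        (Ne.symm h3) (Ne.symm h6) hxy) wS5
      (fun i j => decide (G.Adj (v5 a b c x y i) (v5 a b c x y j)))
      (fun i j => by simp)
      (run5S _ (fun i j => by simp [G.adj_comm])
        (fun i => decide_eq_false (G.loopless.irrefl _))
        (decide_eq_true hab) (decide_eq_true hac) (decide_eq_false hnbc))
    have e5 : wS5.map (v5 a b c x y) = [a, b, a, c, b, a, c] := rfl
    rw [e5] at h
    exact h.1

end Stmt9Aux

/-- In a connected graph on at least 3 vertices, the color of any single vertex can be
flipped (graph unchanged) using a string of length 7. -/
theorem stmt9 {V : Type*} [Fintype V] (G : SimpleGraph V) (hconn : G.Connected)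
    (hn : 3 ≤ Fintype.card V) (a : V) (β : V → ℤˣ) :
    ∃ w : List V, w.length = 7 ∧ invSeq (G, β) w = flipOn (G, β) {a} := by
  classical
  obtain ⟨b, hab⟩ : ∃ b, G.Adj a b := by
    obtain ⟨v, hv⟩ := Fintype.exists_ne_of_one_lt_card (by omega) a
    obtain ⟨p⟩ := hconn.preconnected a v
    cases p with
    | nil => exact absurd rfl hv
    | cons h q => exact ⟨_, h⟩
  by_cases hc : ∃ c, G.Adj b c ∧ c ≠ a
  · obtain ⟨c, hbc, hca⟩ := hc
    exact ⟨[a, b, a, c, a, b, c], rfl, Stmt9Aux.keyP G β a b c hab hbc hca⟩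
  · push_neg at hc
    have hex : ∃ c, G.Adj a c ∧ c ≠ b := by
      by_contra hno
      push_neg at hno
      have closed : ∀ (u v : V) (p : G.Walk u v), (u = a ∨ u = b) → (v = a ∨ v = b) := by
        intro u v p
        induction p with
        | nil => exact id
        | cons h q ih =>
          rename_i u' w' v'
          intro hu
          apply ih
          rcases hu with rfl | rfl
          · exact Or.inr (hno w' h)
          · exact Or.inl (hc w' h)
      have hall : ∀ v : V, v = a ∨ v = b := fun v =>
        (hconn.preconnected a v).elim fun p => closed a v p (Or.inl rfl)
      have hsub : (Finset.univ : Finset V) ⊆ {a, b} := by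
        intro v _
        rcases hall v with rfl | rfl <;> simp
      have hle := Finset.card_le_card hsub
      have h2 : ({a, b} : Finset V).card ≤ 2 :=
        (Finset.card_insert_le _ _).trans (by simp)
      rw [Finset.card_univ] at hle
      omega
    obtain ⟨c, hac, hcb⟩ := hex
    have hnbc : ¬ G.Adj b c := by
      intro h
      have hca : c = a := hc c h
      rw [hca] at hac
      exact G.loopless.irrefl a hac
    exact ⟨[a, b, a, c, b, a, c], rfl, Stmt9Aux.keyS G β a b c hab hac hnbc (Ne.symm hcb)⟩
end

section
/- Let T be a rooted tree on n vertices in which every vertex has odd degree. Then the edge set of T can be partitioned into (n-2)/2 paths P_3 (on 3 vertices) together with one single edge K_2, such that: (i) in each P_3 the two endvertices are children of its center with respect to the root; (ii) the root is an endvertex of the K_2; (iii) every vertex of T is an endvertex of exactly one path (P_3 or K_2) in the partition. -/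
open Classical

section OddTreeAux
open SimpleGraph


variable {V : Type*} [DecidableEq V] (G : SimpleGraph V)

lemma oddtree_dist_ne (hT : G.IsTree) (r u w : V) (h : G.Adj u w) :
    G.dist r u ≠ G.dist r w := by
  intro heq
  obtain ⟨p, hp, hl⟩ := hT.isConnected.exists_path_of_dist u r
  obtain ⟨q, hq, hql⟩ := hT.isConnected.exists_path_of_dist w r
  have hcu : G.dist u r = G.dist r u := SimpleGraph.dist_comm
  have hcw : G.dist w r = G.dist r w := SimpleGraph.dist_comm
  have hwp : w ∉ p.support := by
    intro hmem
    have h1 : G.dist u w ≤ (p.takeUntil w hmem).length := SimpleGraph.dist_le _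
    have h2 : G.dist w r ≤ (p.dropUntil w hmem).length := SimpleGraph.dist_le _
    have h3 : (p.takeUntil w hmem).length + (p.dropUntil w hmem).length = p.length := by
      rw [← SimpleGraph.Walk.length_append, SimpleGraph.Walk.take_spec]
    have h4 : 0 < G.dist u w := hT.isConnected.pos_dist_of_ne h.ne
    omega
  have hcons : (p.cons h.symm).IsPath := hp.cons hwp
  have he := (hT.existsUnique_path w r).unique hcons hq
  have hlen := congrArg SimpleGraph.Walk.length he
  rw [SimpleGraph.Walk.length_cons, hl, hql] at hlen
  omega

lemma oddtree_dist_class (hT : G.IsTree) (r u w : V) (h : G.Adj u w) :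
    G.dist r w = G.dist r u + 1 ∨ G.dist r w + 1 = G.dist r u := by
  have h1 : G.dist r w ≤ G.dist r u + G.dist u w := hT.isConnected.dist_triangle
  have h2 : G.dist r u ≤ G.dist r w + G.dist w u := hT.isConnected.dist_triangle
  have h3 : G.dist u w = 1 := SimpleGraph.dist_eq_one_iff_adj.2 h
  have h4 : G.dist w u = 1 := SimpleGraph.dist_eq_one_iff_adj.2 h.symm
  have h5 := oddtree_dist_ne G hT r u w h
  omega

lemma oddtree_parent_exists (hT : G.IsTree) (r u : V) (hu : u ≠ r) :
    ∃ w, G.Adj u w ∧ G.dist r w + 1 = G.dist r u := by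
  obtain ⟨p, hp, hl⟩ := hT.isConnected.exists_path_of_dist u r
  have hd : 0 < G.dist u r := hT.isConnected.pos_dist_of_ne hu
  have hnil : ¬ p.Nil := by
    rw [SimpleGraph.Walk.nil_iff_length_eq]
    omega
  refine ⟨p.getVert 1, p.adj_snd hnil, ?_⟩
  have h2 : G.dist (p.getVert 1) r ≤ p.tail.length := SimpleGraph.dist_le _
  have h3 : p.tail.length + 1 = p.length := SimpleGraph.Walk.length_tail_add_one hnil
  have h4 : G.dist u r ≤ G.dist u (p.getVert 1) + G.dist (p.getVert 1) r :=
    hT.isConnected.dist_triangle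
  have h5 : G.dist u (p.getVert 1) = 1 :=
    SimpleGraph.dist_eq_one_iff_adj.2 (p.adj_snd hnil)
  have hc1 : G.dist (p.getVert 1) r = G.dist r (p.getVert 1) := SimpleGraph.dist_comm
  have hc2 : G.dist u r = G.dist r u := SimpleGraph.dist_comm
  omega

lemma oddtree_parent_unique (hT : G.IsTree) (r u w1 w2 : V)
    (h1 : G.Adj u w1) (hd1 : G.dist r w1 + 1 = G.dist r u)
    (h2 : G.Adj u w2) (hd2 : G.dist r w2 + 1 = G.dist r u) : w1 = w2 := by
  obtain ⟨q1, hq1, hl1⟩ := hT.isConnected.exists_path_of_dist w1 r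
  obtain ⟨q2, hq2, hl2⟩ := hT.isConnected.exists_path_of_dist w2 r
  have hc1 : G.dist w1 r = G.dist r w1 := SimpleGraph.dist_comm
  have hc2 : G.dist w2 r = G.dist r w2 := SimpleGraph.dist_comm
  have hcu : G.dist u r = G.dist r u := SimpleGraph.dist_comm
  have hlen1 : (q1.cons h1).length = G.dist u r := by
    rw [SimpleGraph.Walk.length_cons, hl1]; omega
  have hlen2 : (q2.cons h2).length = G.dist u r := by
    rw [SimpleGraph.Walk.length_cons, hl2]; omega
  have hp1 : (q1.cons h1).IsPath := SimpleGraph.Walk.isPath_of_length_eq_dist _ hlen1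
  have hp2 : (q2.cons h2).IsPath := SimpleGraph.Walk.isPath_of_length_eq_dist _ hlen2
  have he := (hT.existsUnique_path u r).unique hp1 hp2
  have := congrArg (fun w => SimpleGraph.Walk.getVert w 1) he
  simpa [SimpleGraph.Walk.getVert_cons_succ] using this



end OddTreeAux

def pairUp {α : Type*} : List α → List (α × α)
  | a :: b :: t => (a, b) :: pairUp t
  | _ => []

lemma pairUp_bind {α : Type*} : ∀ (l : List α), Even l.length →
    (↑(pairUp l) : Multiset (α × α)).bind (fun q => {q.1, q.2}) = (↑l : Multiset α)
  | [], _ => by simp [pairUp]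
  | [a], h => by simp [Nat.even_iff] at h
  | a :: b :: t, h => by
    have ht : Even t.length := by
      obtain ⟨k, hk⟩ := h
      exact ⟨k - 1, by simp at hk; omega⟩
    have ih := pairUp_bind t ht
    show ((((a,b) : α × α) ::ₘ ↑(pairUp t)).bind (fun q => {q.1, q.2})) = _
    rw [Multiset.cons_bind, ih]
    simp [Multiset.insert_eq_cons]

lemma pairUp_mem {α : Type*} : ∀ {l : List α} {q : α × α}, q ∈ pairUp l → q.1 ∈ l ∧ q.2 ∈ l
  | [], q, hq => by simp [pairUp] at hq
  | [a], q, hq => by simp [pairUp] at hq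
  | a :: b :: t, q, hq => by
    rcases List.mem_cons.1 hq with h | h
    · subst h; simp
    · have := pairUp_mem h
      simp [this.1, this.2]

lemma pairUp_nodup {α : Type*} : ∀ {l : List α}, l.Nodup → (pairUp l).Nodup
  | [], _ => by simp [pairUp]
  | [a], _ => by simp [pairUp]
  | a :: b :: t, h => by
    simp only [List.nodup_cons] at h
    refine List.nodup_cons.2 ⟨?_, pairUp_nodup h.2.2⟩
    intro hmem
    exact h.1 (by simpa using Or.inr (pairUp_mem hmem).1)

lemma pairUp_ne {α : Type*} : ∀ {l : List α}, l.Nodup → ∀ {q : α × α}, q ∈ pairUp l → q.1 ≠ q.2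
  | [], _, q, hq => by simp [pairUp] at hq
  | [a], _, q, hq => by simp [pairUp] at hq
  | a :: b :: t, h, q, hq => by
    simp only [List.nodup_cons] at h
    rcases List.mem_cons.1 hq with h' | h'
    · subst h'
      intro hab
      simp only at hab
      exact h.1 (List.mem_cons.2 (Or.inl hab))
    · exact pairUp_ne h.2.2 h'

/-- The edges of a rooted odd tree `G` (rooted at `r`) on `n` vertices can be partitioned
into `(n-2)/2` copies of `P_3` (encoded as triples `(x, c, y)` for the path `x - c - y`)
together with one `K_2` (the edge `r v`), such that:
(i) in each `P_3` the two endvertices are children of its center with respect to `r`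
    (their distance from `r` exceeds that of the center by one);
(ii) the root `r` is an endvertex of the `K_2`; and
(iii) every vertex is an endvertex of exactly one member of the partition (the multiset
      of endvertices is exactly the vertex set). The edge multiset of the members is
      exactly the edge set of the tree, so the members partition the edges. -/
theorem stmt10 {V : Type*} [Fintype V] [DecidableEq V] (G : SimpleGraph V)
    [DecidableRel G.Adj] (hT : G.IsTree) (r : V) (hodd : ∀ v : V, Odd (G.degree v)) :
    ∃ (P : Finset (V × V × V)) (v : V),
      P.card = (Fintype.card V - 2) / 2 ∧
      G.Adj r v ∧
      (∀ p ∈ P, G.Adj p.2.1 p.1 ∧ G.Adj p.2.1 p.2.2 ∧ p.1 ≠ p.2.2 ∧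
        G.dist r p.1 = G.dist r p.2.1 + 1 ∧ G.dist r p.2.2 = G.dist r p.2.1 + 1) ∧
      (P.val.bind (fun p => {s(p.1, p.2.1), s(p.2.1, p.2.2)}) + {s(r, v)}
        = G.edgeFinset.val) ∧
      (P.val.bind (fun p => {p.1, p.2.2}) + {r, v} = (Finset.univ : Finset V).val) := by
  classical
  set children : V → Finset V := fun c =>
    Finset.univ.filter (fun w => G.Adj c w ∧ G.dist r w = G.dist r c + 1) with hchildren
  have hmem_children : ∀ c u, u ∈ children c ↔ G.Adj c u ∧ G.dist r u = G.dist r c + 1 := by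
    intro c u; simp [hchildren]
  have hpar0 : ∀ u : V, u ≠ r → ∃ w, G.Adj u w ∧ G.dist r w + 1 = G.dist r u :=
    fun u hu => oddtree_parent_exists G hT r u hu
  choose! par hpadj hpdist using hpar0
  have hchild_ne_root : ∀ c u, u ∈ children c → u ≠ r := by
    intro c u hu hur
    rw [hmem_children] at hu
    subst hur
    have := hu.2
    simp [SimpleGraph.dist_self] at this
  have hchild_iff : ∀ c u, u ≠ r → (u ∈ children c ↔ c = par u) := by
    intro c u hu
    constructor
    · intro h
      rw [hmem_children] at h
      exact oddtree_parent_unique G hT r u c (par u) h.1.symm (by omega)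
        (hpadj u hu) (hpdist u hu)
    · rintro rfl
      rw [hmem_children]
      exact ⟨(hpadj u hu).symm, by have := hpdist u hu; omega⟩
  -- degree computations
  have hdeg_r : (children r).card = G.degree r := by
    congr 1
    ext w
    rw [hmem_children, SimpleGraph.mem_neighborFinset]
    constructor
    · exact fun h => h.1
    · intro h
      refine ⟨h, ?_⟩
      rw [SimpleGraph.dist_self]
      simpa using SimpleGraph.dist_eq_one_iff_adj.2 h
  have hdeg : ∀ c, c ≠ r → (children c).card + 1 = G.degree c := by
    intro c hc
    have hnb : G.neighborFinset c = insert (par c) (children c) := by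
      ext w
      rw [SimpleGraph.mem_neighborFinset, Finset.mem_insert, hmem_children]
      constructor
      · intro hadj
        rcases oddtree_dist_class G hT r c w hadj with h | h
        · exact Or.inr ⟨hadj, h⟩
        · exact Or.inl (oddtree_parent_unique G hT r c w (par c) hadj h
            (hpadj c hc) (hpdist c hc))
      · rintro (rfl | ⟨h, _⟩)
        · exact hpadj c hc
        · exact h
    have hnotin : par c ∉ children c := by
      rw [hmem_children]
      rintro ⟨-, h2⟩
      have := hpdist c hc
      omega
    rw [← SimpleGraph.card_neighborFinset_eq_degree, hnb,
      Finset.card_insert_of_notMem hnotin]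
  have hodd_r : Odd (children r).card := hdeg_r ▸ hodd r
  have heven : ∀ c, c ≠ r → Even (children c).card := by
    intro c hc
    have h1 := hdeg c hc
    have h2 := hodd c
    rw [Nat.odd_iff] at h2
    rw [Nat.even_iff]
    omega
  have hvne : (children r).Nonempty := by
    rw [← Finset.card_pos]
    rcases hodd_r with ⟨k, hk⟩
    omega
  obtain ⟨v, hv⟩ := hvne
  have hadj_rv : G.Adj r v := ((hmem_children r v).1 hv).1
  -- the trimmed children sets
  set S : V → Finset V := fun c => if c = r then (children r).erase v else children c with hS
  have hSr : S r = (children r).erase v := by simp [hS]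
  have hSnr : ∀ c, c ≠ r → S c = children c := by intro c h; simp [hS, h]
  have hSsub : ∀ c, S c ⊆ children c := by
    intro c
    by_cases h : c = r
    · subst h; rw [hSr]; exact Finset.erase_subset _ _
    · rw [hSnr c h]
  have hSeven : ∀ c, Even (S c).card := by
    intro c
    by_cases h : c = r
    · subst h
      rw [hSr, Finset.card_erase_of_mem hv]
      rw [Nat.odd_iff] at hodd_r
      rw [Nat.even_iff]
      omega
    · rw [hSnr c h]; exact heven c h
  have hSval : ∀ c, (children c).val = (S c).val + (if c = r then {v} else 0) := by
    intro c
    by_cases hcr : c = r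
    · subst hcr
      rw [hSr, if_pos rfl, Finset.erase_val, add_comm, Multiset.singleton_add,
        Multiset.cons_erase (Finset.mem_def.1 hv)]
    · rw [hSnr c hcr, if_neg hcr, add_zero]
  -- pair lists
  set plist : V → List (V × V) := fun c => pairUp (S c).toList with hplist
  have hplist_bind : ∀ c,
      (↑(plist c) : Multiset (V × V)).bind (fun q => {q.1, q.2}) = (S c).val := by
    intro c
    rw [hplist]
    have := pairUp_bind (S c).toList (by
      rw [Finset.length_toList]; exact hSeven c)
    rw [this, Finset.coe_toList]
  have hq_mem : ∀ c q, q ∈ plist c → q.1 ∈ children c ∧ q.2 ∈ children c ∧ q.1 ≠ q.2 := by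
    intro c q hq
    rw [hplist] at hq
    have h1 := pairUp_mem hq
    have h2 := pairUp_ne (Finset.nodup_toList _) hq
    simp only [Finset.mem_toList] at h1
    exact ⟨hSsub c h1.1, hSsub c h1.2, h2⟩
  -- the multiset of triples
  set Pm : Multiset (V × V × V) :=
    Finset.univ.val.bind (fun c => ↑((plist c).map (fun q => (q.1, c, q.2)))) with hPm
  have hPmnodup : Pm.Nodup := by
    rw [hPm, Multiset.nodup_bind]
    constructor
    · intro c _
      rw [Multiset.coe_nodup]
      refine (pairUp_nodup (Finset.nodup_toList _)).map ?_
      intro q q' h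
      simpa using congrArg (fun p : V × V × V => (p.1, p.2.2)) h
    · refine Finset.univ.nodup.pairwise ?_
      intro a _ b _ hab
      rw [Function.onFun]
      rw [Multiset.disjoint_left]
      intro x hxa hxb
      simp only [Multiset.mem_coe, List.mem_map] at hxa hxb
      obtain ⟨q, -, rfl⟩ := hxa
      obtain ⟨q', -, hq'⟩ := hxb
      exact hab (by simpa using congrArg (fun p : V × V × V => p.2.1) hq'.symm)
  set P : Finset (V × V × V) := ⟨Pm, hPmnodup⟩ with hPdef
  have hPval : P.val = Pm := rfl
  have hmemP : ∀ p : V × V × V, p ∈ P ↔ ∃ c, ∃ q ∈ plist c, (q.1, c, q.2) = p := by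
    intro p
    rw [← Finset.mem_val, hPval, hPm]
    simp [Multiset.mem_bind, List.mem_map]
  -- key multiset identity for children
  have hcount : ∀ (t : Finset V) (a : V), t.val.count a = if a ∈ t then 1 else 0 := by
    intro t a
    split_ifs with h
    · exact Multiset.count_eq_one_of_mem t.nodup h
    · exact Multiset.count_eq_zero_of_notMem (fun hm => h hm)
  have hbind_children :
      Finset.univ.val.bind (fun c => (children c).val) = (Finset.univ.erase r).val := by
    refine Multiset.ext.2 fun a => ?_
    rw [Multiset.count_bind]
    rw [show ∀ g : V → ℕ, (Finset.univ.val.map g).sum = ∑ c, g c from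
      fun g => (Finset.sum_eq_multiset_sum _ _).symm]
    by_cases har : a = r
    · have h0 : ∀ c, Multiset.count a (children c).val = 0 := by
        intro c
        rw [hcount]
        simp only [ite_eq_right_iff]
        intro h
        exact absurd har (hchild_ne_root c a h)
      rw [Finset.sum_congr rfl (fun c _ => h0 c)]
      rw [hcount]
      simp [har]
    · have h1 : ∀ c, Multiset.count a (children c).val = if c = par a then 1 else 0 := by
        intro c
        rw [hcount]
        by_cases hc : c = par a
        · rw [if_pos hc, if_pos ((hchild_iff c a har).2 hc)]
        · rw [if_neg hc, if_neg (fun hm => hc ((hchild_iff c a har).1 hm))]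
      rw [Finset.sum_congr rfl (fun c _ => h1 c)]
      rw [Finset.sum_ite_eq' Finset.univ (par a) (fun _ => 1)]
      rw [hcount]
      simp [Finset.mem_erase, har]
  have hbind_ind :
      Finset.univ.val.bind (fun c => (if c = r then ({v} : Multiset V) else 0)) = {v} := by
    have hu : (Finset.univ : Finset V).val = r ::ₘ (Finset.univ.val.erase r) :=
      (Multiset.cons_erase (Finset.mem_def.1 (Finset.mem_univ r))).symm
    rw [hu, Multiset.cons_bind, if_pos rfl]
    have : (Finset.univ.val.erase r).bind
        (fun c => (if c = r then ({v} : Multiset V) else 0))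
        = (Finset.univ.val.erase r).bind (fun _ => (0 : Multiset V)) := by
      refine Multiset.bind_congr fun c hc => ?_
      rw [if_neg]
      rintro rfl
      exact Finset.univ.nodup.notMem_erase hc
    rw [this, Multiset.bind_zero, add_zero]
  have hbind_S :
      Finset.univ.val.bind (fun c => (S c).val) + {v} = (Finset.univ.erase r).val := by
    rw [← hbind_children,
      Multiset.bind_congr (fun c (_ : c ∈ Finset.univ.val) => hSval c),
      Multiset.bind_add, hbind_ind]
  -- vertex identity
  have hvtx : P.val.bind (fun p => ({p.1, p.2.2} : Multiset V)) + {r, v}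
      = (Finset.univ : Finset V).val := by
    rw [hPval, hPm, Multiset.bind_assoc]
    have hinner : ∀ c ∈ Finset.univ.val,
        (↑((plist c).map (fun q => (q.1, c, q.2))) : Multiset (V × V × V)).bind
          (fun p => ({p.1, p.2.2} : Multiset V)) = (S c).val := by
      intro c _
      rw [← Multiset.map_coe, Multiset.bind_map]
      exact hplist_bind c
    rw [Multiset.bind_congr hinner]
    have hrv : ({r, v} : Multiset V) = {v} + {r} := by
      rw [Multiset.insert_eq_cons, add_comm, Multiset.singleton_add]
    rw [hrv, ← add_assoc, hbind_S, add_comm, Multiset.singleton_add, Finset.erase_val,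
      Multiset.cons_erase (Finset.mem_def.1 (Finset.mem_univ r))]
  -- edge identity
  have hedge : P.val.bind (fun p => ({s(p.1, p.2.1), s(p.2.1, p.2.2)} : Multiset (Sym2 V)))
      + {s(r, v)} = G.edgeFinset.val := by
    rw [hPval, hPm, Multiset.bind_assoc]
    have hinner : ∀ c ∈ Finset.univ.val,
        (↑((plist c).map (fun q => (q.1, c, q.2))) : Multiset (V × V × V)).bind
          (fun p => ({s(p.1, p.2.1), s(p.2.1, p.2.2)} : Multiset (Sym2 V)))
        = (S c).val.map (fun u => s(u, c)) := by
      intro c _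
      rw [← Multiset.map_coe, Multiset.bind_map]
      have h1 : (↑(plist c) : Multiset (V × V)).bind
          (fun q => ({s(q.1, c), s(c, q.2)} : Multiset (Sym2 V)))
          = (↑(plist c) : Multiset (V × V)).bind
          (fun q => ({s(q.1, c), s(q.2, c)} : Multiset (Sym2 V))) := by
        refine Multiset.bind_congr fun q _ => ?_
        rw [Sym2.eq_swap (a := c) (b := q.2)]
      show (↑(plist c) : Multiset (V × V)).bind
          (fun q => ({s(q.1, c), s(c, q.2)} : Multiset (Sym2 V))) = _
      rw [h1]
      have h2 : (↑(plist c) : Multiset (V × V)).bind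
          (fun q => ({s(q.1, c), s(q.2, c)} : Multiset (Sym2 V)))
          = Multiset.map (fun u => s(u, c))
            ((↑(plist c) : Multiset (V × V)).bind (fun q => ({q.1, q.2} : Multiset V))) := by
        rw [Multiset.map_bind]
        refine Multiset.bind_congr fun q _ => ?_
        simp [Multiset.insert_eq_cons]
      rw [h2, hplist_bind]
    rw [Multiset.bind_congr hinner]
    have hsplit : ∀ c ∈ Finset.univ.val, (children c).val.map (fun u => s(u, c))
        = (S c).val.map (fun u => s(u, c))
          + (if c = r then ({s(v, r)} : Multiset (Sym2 V)) else 0) := by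
      intro c _
      rw [hSval c, Multiset.map_add]
      congr 1
      split_ifs with h
      · subst h; simp
      · simp
    have hstep : Finset.univ.val.bind (fun c => (children c).val.map (fun u => s(u, c)))
        = Finset.univ.val.bind (fun c => (S c).val.map (fun u => s(u, c))) + {s(v, r)} := by
      rw [Multiset.bind_congr hsplit, Multiset.bind_add]
      congr 1
      have hu : (Finset.univ : Finset V).val = r ::ₘ (Finset.univ.val.erase r) :=
        (Multiset.cons_erase (Finset.mem_def.1 (Finset.mem_univ r))).symm
      rw [hu, Multiset.cons_bind, if_pos rfl]
      have : (Finset.univ.val.erase r).bind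
          (fun c => (if c = r then ({s(v, r)} : Multiset (Sym2 V)) else 0))
          = (Finset.univ.val.erase r).bind (fun _ => (0 : Multiset (Sym2 V))) := by
        refine Multiset.bind_congr fun c hc => ?_
        rw [if_neg]
        rintro rfl
        exact Finset.univ.nodup.notMem_erase hc
      rw [this, Multiset.bind_zero, add_zero]
    have hswap : s(r, v) = s(v, r) := Sym2.eq_swap
    rw [hswap, ← hstep]
    -- now show bind over children = edgeFinset.val
    have hmapF : Finset.univ.val.bind (fun c => (children c).val.map (fun u => s(u, c)))
        = (Finset.univ.erase r).val.map (fun u => s(u, par u)) := by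
      have hc1 : ∀ c ∈ Finset.univ.val, (children c).val.map (fun u => s(u, c))
          = (children c).val.map (fun u => s(u, par u)) := by
        intro c _
        refine Multiset.map_congr rfl fun u hu => ?_
        have humem : u ∈ children c := hu
        have hur : u ≠ r := hchild_ne_root c u humem
        rw [(hchild_iff c u hur).1 humem]
      rw [Multiset.bind_congr hc1, ← Multiset.map_bind, hbind_children]
    rw [hmapF]
    -- final: map of parent edges equals edge set
    have hnodupmap : ((Finset.univ.erase r).val.map (fun u => s(u, par u))).Nodup := by
      refine Multiset.Nodup.map_on ?_ (Finset.univ.erase r).nodup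
      intro x hx y hy hxy
      rw [Finset.mem_val, Finset.mem_erase] at hx hy
      have hdx := hpdist x hx.1
      have hdy := hpdist y hy.1
      rw [Sym2.eq_iff] at hxy
      rcases hxy with ⟨h1, -⟩ | ⟨h1, h2⟩
      · exact h1
      · rw [h2] at hdx
        rw [← h1] at hdy
        omega
    have hsub : ((Finset.univ.erase r).val.map (fun u => s(u, par u))) ⊆ G.edgeFinset.val := by
      intro e he
      rw [Multiset.mem_map] at he
      obtain ⟨u, hu, rfl⟩ := he
      rw [Finset.mem_val, Finset.mem_erase] at hu
      rw [Finset.mem_val, SimpleGraph.mem_edgeFinset, SimpleGraph.mem_edgeSet]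
      exact hpadj u hu.1
    have hcards : Multiset.card ((Finset.univ.erase r).val.map (fun u => s(u, par u)))
        = Multiset.card G.edgeFinset.val := by
      rw [Multiset.card_map]
      have : Multiset.card (Finset.univ.erase r).val = (Finset.univ.erase r).card := rfl
      rw [this, Finset.card_erase_of_mem (Finset.mem_univ r)]
      have h6 := hT.card_edgeFinset
      rw [show Multiset.card G.edgeFinset.val = G.edgeFinset.card from rfl, Finset.card_univ]
      omega
    exact Multiset.eq_of_le_of_card_le
      ((Multiset.le_iff_subset hnodupmap).2 hsub) (le_of_eq hcards.symm)
  -- cardinality of P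
  have hcard : P.card = (Fintype.card V - 2) / 2 := by
    have h1 := congrArg Multiset.card hvtx
    rw [Multiset.card_add, Multiset.card_bind] at h1
    have h2 : (P.val.map (Multiset.card ∘ fun p : V × V × V => ({p.1, p.2.2} : Multiset V)))
        = P.val.map (fun _ => 2) := by
      refine Multiset.map_congr rfl fun p _ => ?_
      simp [Multiset.insert_eq_cons]
    rw [h2, Multiset.map_const', Multiset.sum_replicate, smul_eq_mul] at h1
    have h3 : Multiset.card ({r, v} : Multiset V) = 2 := by
      simp [Multiset.insert_eq_cons]
    have h4 : Multiset.card (Finset.univ : Finset V).val = Fintype.card V := rfl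
    rw [h3, h4] at h1
    have h5 : P.card = Multiset.card P.val := rfl
    omega
  refine ⟨P, v, hcard, hadj_rv, ?_, hedge, hvtx⟩
  intro p hp
  obtain ⟨c, q, hq, rfl⟩ := (hmemP p).1 hp
  obtain ⟨h1, h2, h3⟩ := hq_mem c q hq
  rw [hmem_children] at h1 h2
  exact ⟨h1.1, h2.1, h3, h1.2, h2.2⟩
end
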